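/- Let S be a finite scenario set, each scenario i associated with a vector a^(i) ∈ ℝⁿ, and suppose costs are f_i(x) = h(x − a^(i)) + kᵀx for a quasiconvex function h : ℝⁿ → ℝ and fixed k ∈ ℝⁿ. If for some scenario j there exist λ_i ≥ 0 with Σ_{i∈S_j} λ_i = 1 (j ∉ S_j ⊆ S) and a^(j) = Σ_{i∈S_j} λ_i a^(i), then max_{i∈S} f_i(x) = max_{i∈S∖{j}} f_i(x) for all x, so scenario j can be removed without affecting the minimax cost problem. -/

import Mathlib

/-- Lemma 5 (cost part): if `a j` is a convex combination of the other mean-demand vectors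
and costs are `f i x = h (x - a i) + kᵀx` with `h` quasiconvex, then scenario `j` is redundant
for the minimax cost problem: the pointwise maximum is unchanged when `j` is removed. -/
theorem stmt7 {n : ℕ} {S : Type*} [Fintype S] [Nonempty S] [DecidableEq S]
    (a : S → (Fin n → ℝ)) (h : (Fin n → ℝ) → ℝ) (k : Fin n → ℝ)
    (hq : ∀ z : ℝ, Convex ℝ {y : Fin n → ℝ | h y ≤ z})
    (f : S → (Fin n → ℝ) → ℝ)
    (hfdef : ∀ i x, f i x = h (x - a i) + ∑ t, k t * x t)
    (j : S) (Sj : Finset S) (hjSj : j ∉ Sj) (hSj : Sj.Nonempty)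
    (lam : S → ℝ) (hlam : ∀ i ∈ Sj, 0 ≤ lam i) (hsum : ∑ i ∈ Sj, lam i = 1)
    (haj : a j = ∑ i ∈ Sj, lam i • a i) :
    ∀ x : Fin n → ℝ,
      Finset.univ.sup' Finset.univ_nonempty (fun i => f i x) =
      (Finset.univ.erase j).sup'
        (hSj.imp fun i hi =>
          Finset.mem_erase.mpr ⟨fun hij => hjSj (hij ▸ hi), Finset.mem_univ i⟩)
        (fun i => f i x) := by
  intro x
  have hne : (Finset.univ.erase j).Nonempty :=
    hSj.imp fun i hi =>
      Finset.mem_erase.mpr ⟨fun hij => hjSj (hij ▸ hi), Finset.mem_univ i⟩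
  -- the value at j is dominated
  set z := Sj.sup' hSj (fun i => h (x - a i)) with hz
  have hmem : (x - a j) ∈ {y : Fin n → ℝ | h y ≤ z} := by
    have hxj : x - a j = ∑ i ∈ Sj, lam i • (x - a i) := by
      rw [haj]
      have : ∑ i ∈ Sj, lam i • (x - a i)
          = (∑ i ∈ Sj, lam i) • x - ∑ i ∈ Sj, lam i • a i := by
        simp [smul_sub, Finset.sum_sub_distrib, Finset.sum_smul]
      rw [this, hsum, one_smul]
    rw [hxj]
    exact (hq z).sum_mem hlam hsum
      (fun i hi => Finset.le_sup' (fun i => h (x - a i)) hi)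
  have hjle : f j x ≤ Sj.sup' hSj (fun i => f i x) := by
    rw [hfdef]
    obtain ⟨i, hi, hzi⟩ := Finset.exists_mem_eq_sup' hSj (fun i => h (x - a i))
    calc h (x - a j) + ∑ t, k t * x t ≤ z + ∑ t, k t * x t := by
          have h0 : h (x - a j) ≤ z := hmem
          linarith
      _ = f i x := by rw [hz, hzi, hfdef]
      _ ≤ Sj.sup' hSj (fun i => f i x) := Finset.le_sup' (fun i => f i x) hi
  apply le_antisymm
  · apply Finset.sup'_le
    intro i hi
    by_cases hij : i = j
    · subst hij
      refine hjle.trans (Finset.sup'_le _ _ fun b hb => ?_)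
      exact Finset.le_sup' (fun i => f i x) (Finset.mem_erase.mpr ⟨fun e => hjSj (by rwa [← e]), Finset.mem_univ b⟩)
    · exact Finset.le_sup' (fun i => f i x) (Finset.mem_erase.mpr ⟨hij, Finset.mem_univ i⟩)
  · exact Finset.sup'_le _ _ fun i _ => Finset.le_sup' (fun i => f i x) (Finset.mem_univ i)
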